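/- For two positive semidefinite Hermitian matrices A and B, the operator norm of their difference satisfies ‖A − B‖ ≤ max(‖A‖, ‖B‖). -/

import Mathlib

open scoped ComplexOrder

/-- The spectral (operator) norm of a complex matrix, viewed as a linear map on
Euclidean spaces. -/
noncomputable def opNorm {m n : Type*} [Fintype m] [Fintype n] [DecidableEq n]
    (A : Matrix m n ℂ) : ℝ :=
  ‖LinearMap.toContinuousLinearMap (Matrix.toEuclideanLin A)‖

set_option maxHeartbeats 2000000 in
open Matrix in
lemma aux_nonneg {n : ℕ} {A : Matrix (Fin n) (Fin n) ℂ} (hA : A.PosSemidef) :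
    (0 : EuclideanSpace ℂ (Fin n) →L[ℂ] EuclideanSpace ℂ (Fin n)) ≤
      LinearMap.toContinuousLinearMap (Matrix.toEuclideanLin A) := by
  rw [ContinuousLinearMap.nonneg_iff_isPositive]
  constructor
  · exact Matrix.isHermitian_iff_isSymmetric.mp hA.1
  · intro x
    rw [ContinuousLinearMap.reApplyInnerSelf_apply]
    have h2 : (inner ℂ x (LinearMap.toContinuousLinearMap (Matrix.toEuclideanLin A) x) : ℂ) =
        star ((WithLp.equiv 2 _) x) ⬝ᵥ A *ᵥ ((WithLp.equiv 2 _) x) := by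
      rw [EuclideanSpace.inner_eq_star_dotProduct]
      simp [Matrix.toEuclideanLin_apply, dotProduct, mul_comm]
    have h3 : 0 ≤ (inner ℂ x (LinearMap.toContinuousLinearMap (Matrix.toEuclideanLin A) x) : ℂ) := by
      rw [h2]; exact hA.dotProduct_mulVec_nonneg _
    rw [← inner_conj_symm, RCLike.conj_re]
    exact RCLike.nonneg_iff.mp h3 |>.1

set_option maxHeartbeats 2000000 in
/-- For positive semidefinite Hermitian matrices `A` and `B`,
`‖A − B‖ ≤ max (‖A‖, ‖B‖)` in the operator norm. -/
theorem opNorm_sub_le_max_of_posSemidef {n : ℕ} (A B : Matrix (Fin n) (Fin n) ℂ)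
    (hA : A.PosSemidef) (hB : B.PosSemidef) :
    opNorm (A - B) ≤ max (opNorm A) (opNorm B) := by
  set a := LinearMap.toContinuousLinearMap (Matrix.toEuclideanLin A) with ha_def
  set b := LinearMap.toContinuousLinearMap (Matrix.toEuclideanLin B) with hb_def
  have hab : LinearMap.toContinuousLinearMap (Matrix.toEuclideanLin (A - B)) = a - b := by
    simp [ha_def, hb_def]
  show ‖LinearMap.toContinuousLinearMap (Matrix.toEuclideanLin (A - B))‖ ≤ max ‖a‖ ‖b‖
  rw [hab]
  have ha : (0 : EuclideanSpace ℂ (Fin n) →L[ℂ] _) ≤ a := aux_nonneg hA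
  have hb : (0 : EuclideanSpace ℂ (Fin n) →L[ℂ] _) ≤ b := aux_nonneg hB
  rcases subsingleton_or_nontrivial
      (EuclideanSpace ℂ (Fin n) →L[ℂ] EuclideanSpace ℂ (Fin n)) with hs | hnt
  · rw [Subsingleton.elim (a - b) 0, norm_zero]
    exact le_max_of_le_left (norm_nonneg a)
  · have hsaa : IsSelfAdjoint a := .of_nonneg ha
    have hsab : IsSelfAdjoint b := .of_nonneg hb
    have hsa : IsSelfAdjoint (a - b) := IsSelfAdjoint.sub (R := EuclideanSpace ℂ (Fin n) →L[ℂ] EuclideanSpace ℂ (Fin n)) hsaa hsab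
    have hub : a - b ≤ algebraMap ℝ _ ‖a‖ :=
      le_trans (sub_le_self a hb) hsaa.le_algebraMap_norm_self
    have hlb : algebraMap ℝ _ (-‖b‖) ≤ a - b := by
      rw [map_neg]
      calc -(algebraMap ℝ _ ‖b‖) ≤ -b := neg_le_neg hsab.le_algebraMap_norm_self
        _ = 0 - b := (zero_sub b).symm
        _ ≤ a - b := sub_le_sub_right ha b
    have h1 : ∀ x ∈ spectrum ℝ (a - b), x ≤ ‖a‖ :=
      (le_algebraMap_iff_spectrum_le hsa).mp hub
    have h2 : ∀ x ∈ spectrum ℝ (a - b), -‖b‖ ≤ x :=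
      (algebraMap_le_iff_le_spectrum hsa).mp hlb
    rcases CStarAlgebra.norm_or_neg_norm_mem_spectrum hsa with h | h
    · exact le_max_of_le_left (h1 _ h)
    · have := h2 _ h
      have : ‖a - b‖ ≤ ‖b‖ := by linarith
      exact le_max_of_le_right this
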